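/- For every real number t ≥ 0 and all vectors p, k in ℝ^d, the inequality 2·exp(−t‖p‖²) − exp(−t‖p+k‖²) − exp(−t‖p−k‖²) ≤ 2·(1 − exp(−t‖k‖²)) holds. -/

import Mathlib

theorem exp_inequality_32 (d : ℕ) (t : ℝ) (ht : 0 ≤ t)
    (p k : EuclideanSpace ℝ (Fin d)) :
    2 * Real.exp (-t * ‖p‖ ^ 2) - Real.exp (-t * ‖p + k‖ ^ 2)
      - Real.exp (-t * ‖p - k‖ ^ 2) ≤ 2 * (1 - Real.exp (-t * ‖k‖ ^ 2)) := by
  have hpk := norm_add_sq_real p k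
  have hmk := norm_sub_sq_real p k
  set u : ℝ := inner ℝ p k with hu
  set a : ℝ := Real.exp (-t * ‖p‖ ^ 2) with ha
  set b : ℝ := Real.exp (-t * ‖k‖ ^ 2) with hb
  set c : ℝ := Real.exp (-(2 * t * u)) with hc
  have hapos : 0 < a := Real.exp_pos _
  have hbpos : 0 < b := Real.exp_pos _
  have hcpos : 0 < c := Real.exp_pos _
  have ha1 : a ≤ 1 := Real.exp_le_one_iff.2 (by nlinarith [sq_nonneg ‖p‖])
  have hb1 : b ≤ 1 := Real.exp_le_one_iff.2 (by nlinarith [sq_nonneg ‖k‖])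
  have h1 : Real.exp (-t * ‖p + k‖ ^ 2) = a * b * c := by
    rw [ha, hb, hc, ← Real.exp_add, ← Real.exp_add]
    ring_nf
    rw [hpk]
    ring_nf
  have h2 : Real.exp (-t * ‖p - k‖ ^ 2) = a * b * c⁻¹ := by
    rw [ha, hb, hc, ← Real.exp_neg, ← Real.exp_add, ← Real.exp_add]
    ring_nf
    rw [hmk]
    ring_nf
  have hcc : 2 ≤ c + c⁻¹ := by
    have h := sq_nonneg (c - 1)
    have hci : c * c⁻¹ = 1 := mul_inv_cancel₀ hcpos.ne'
    nlinarith [mul_pos hcpos (inv_pos.2 hcpos)]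
  rw [h1, h2]
  nlinarith [mul_nonneg (mul_nonneg hapos.le hbpos.le) (sub_nonneg.2 hcc),
    mul_nonneg (sub_nonneg.2 ha1) (sub_nonneg.2 hb1)]
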